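/- If f, g ∈ S₁², then the pointwise product fg belongs to S₁² and ‖fg‖_{S₁²} ≤ 4 ‖f‖_{S₁²} ‖g‖_{S₁²}. -/

import Mathlib

open Metric Filter

/-- Taylor coefficient `a_k(f) = f^{(k)}(0)/k!`. -/
noncomputable def hardyCoeff (f : ℂ → ℂ) (k : ℕ) : ℂ :=
  iteratedDeriv k f 0 / (Nat.factorial k)

/-- `f ∈ H²`: analytic on the open unit disk with square-summable Taylor coefficients. -/
def MemH2 (f : ℂ → ℂ) : Prop :=
  AnalyticOnNhd ℂ f (ball (0 : ℂ) 1) ∧ Summable fun k => ‖hardyCoeff f k‖ ^ 2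

/-- The Hardy space norm `‖f‖_{H²}`. -/
noncomputable def normH2 (f : ℂ → ℂ) : ℝ :=
  Real.sqrt (∑' k, ‖hardyCoeff f k‖ ^ 2)

/-- `f ∈ S_n²`: `f ∈ H²` and `f^{(n)} ∈ H²`. -/
def MemS (n : ℕ) (f : ℂ → ℂ) : Prop :=
  MemH2 f ∧ MemH2 (iteratedDeriv n f)

/-- The norm `‖f‖_{S_n²} = (‖f^{(n)}‖² + ‖f‖²)^{1/2}`. -/
noncomputable def normS (n : ℕ) (f : ℂ → ℂ) : ℝ :=
  Real.sqrt (normH2 (iteratedDeriv n f) ^ 2 + normH2 f ^ 2)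

/-- `f ∈ ₀S_n²`: `f ∈ S_n²` with `f^{(i)}(0) = 0` for `0 ≤ i ≤ n-1`. -/
def Mem0S (n : ℕ) (f : ℂ → ℂ) : Prop :=
  MemS n f ∧ ∀ i < n, iteratedDeriv i f 0 = 0

/-- Complex Riemann–Liouville integral `V_n`. -/
noncomputable def Vn (n : ℕ) (f : ℂ → ℂ) (z : ℂ) : ℂ :=
  z ^ n / (Nat.factorial (n - 1)) *
    ∫ t in (0:ℝ)..1, ((1 - t : ℝ) : ℂ) ^ (n - 1) * f ((t : ℂ) * z)

/-- The operator `T_n f = z f(z) + n ∫₀^z f(w) dw`. -/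
noncomputable def Tn (n : ℕ) (f : ℂ → ℂ) (z : ℂ) : ℂ :=
  z * f z + n * (z * ∫ t in (0:ℝ)..1, f ((t : ℂ) * z))

section Aux
open Finset

lemma hardyCoeff_of_hasFPowerSeries {h : ℂ → ℂ} {p : FormalMultilinearSeries ℂ ℂ ℂ}
    {r : ENNReal} (hp : HasFPowerSeriesOnBall h p 0 r) (k : ℕ) :
    hardyCoeff h k = p.coeff k := by
  have key := hp.factorial_smul (1 : ℂ) k
  have h1 : iteratedDeriv k h 0 = (k.factorial : ℂ) * p.coeff k := by
    rw [iteratedDeriv_eq_iteratedFDeriv, ← key, nsmul_eq_mul]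
    rfl
  rw [hardyCoeff, h1]
  rw [mul_comm, mul_div_assoc, div_self (by exact_mod_cast Nat.factorial_ne_zero k), mul_one]

lemma hardyCoeff_of_hasSum {h : ℂ → ℂ} {c : ℕ → ℂ} {r : NNReal} (hr : 0 < r)
    (hsum : Summable fun n => ‖c n‖ * (r:ℝ)^n)
    (hs : ∀ y : ℂ, ‖y‖ < r → HasSum (fun n => c n * y ^ n) (h y)) (k : ℕ) :
    hardyCoeff h k = c k := by
  set p := FormalMultilinearSeries.ofScalars ℂ c with hp
  have hball : HasFPowerSeriesOnBall h p 0 r := by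
    refine ⟨p.le_radius_of_summable_norm (hsum.congr fun n => ?_), by exact_mod_cast hr, ?_⟩
    · rw [hp, FormalMultilinearSeries.ofScalars_norm]
    · intro y hy
      rw [mem_emetric_ball_zero_iff] at hy
      have hy' : ‖y‖ < r := by exact_mod_cast hy
      have heq : (fun n => p n fun _ => y) = fun n => c n * y ^ n := by
        funext n
        rw [hp, FormalMultilinearSeries.ofScalars_apply_eq, smul_eq_mul]
      rw [zero_add, heq]
      exact hs y hy'
  have := hardyCoeff_of_hasFPowerSeries hball k
  rw [this]
  show (FormalMultilinearSeries.ofScalars ℂ c k) (fun _ => (1:ℂ)) = c k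
  rw [FormalMultilinearSeries.ofScalars_apply_eq, smul_eq_mul, one_pow, mul_one]

lemma exists_expansion {f : ℂ → ℂ} (hf : AnalyticAt ℂ f 0) :
    ∃ r : NNReal, 0 < r ∧ (Summable fun n => ‖hardyCoeff f n‖ * (r:ℝ)^n) ∧
      ∀ y : ℂ, ‖y‖ < r → HasSum (fun n => hardyCoeff f n * y ^ n) (f y) := by
  obtain ⟨p, hp⟩ := hf
  obtain ⟨rp, hrp⟩ := hp
  obtain ⟨r, hr0, hrlt⟩ := ENNReal.lt_iff_exists_nnreal_btwn.1 hrp.r_pos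
  have hcoeff : ∀ k, hardyCoeff f k = p.coeff k := hardyCoeff_of_hasFPowerSeries hrp
  refine ⟨r, by exact_mod_cast hr0, ?_, ?_⟩
  · have := p.summable_norm_mul_pow (hrlt.trans_le hrp.r_le)
    refine this.congr fun n => ?_
    rw [FormalMultilinearSeries.norm_apply_eq_norm_coef, hcoeff]
  · intro y hy
    have hmem : y ∈ Metric.eball (0:ℂ) rp := by
      rw [mem_emetric_ball_zero_iff]
      calc (‖y‖₊ : ENNReal) < r := by exact_mod_cast hy
        _ < rp := hrlt
    have hsum := hrp.hasSum hmem
    rw [zero_add] at hsum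
    have heq : (fun n => p n fun _ => y) = fun n => hardyCoeff f n * y ^ n := by
      funext n
      rw [FormalMultilinearSeries.apply_eq_pow_smul_coeff, smul_eq_mul, hcoeff, mul_comm]
    rwa [heq] at hsum

lemma hardyCoeff_deriv (f : ℂ → ℂ) (k : ℕ) :
    hardyCoeff (deriv f) k = ((k:ℂ)+1) * hardyCoeff f (k+1) := by
  rw [hardyCoeff, hardyCoeff, ← iteratedDeriv_succ', Nat.factorial_succ]
  have hk : ((k:ℂ)+1) ≠ 0 := Nat.cast_add_one_ne_zero k
  have hf : ((k.factorial : ℂ)) ≠ 0 := by exact_mod_cast Nat.factorial_ne_zero k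
  push_cast
  field_simp

lemma hardyCoeff_mul {f g : ℂ → ℂ} (hf : AnalyticAt ℂ f 0) (hg : AnalyticAt ℂ g 0) (k : ℕ) :
    hardyCoeff (fun z => f z * g z) k
      = ∑ j ∈ Finset.range (k+1), hardyCoeff f j * hardyCoeff g (k - j) := by
  obtain ⟨r1, h1, hs1, he1⟩ := exists_expansion hf
  obtain ⟨r2, h2, hs2, he2⟩ := exists_expansion hg
  set a : ℕ → ℂ := hardyCoeff f
  set b : ℕ → ℂ := hardyCoeff g
  set r : NNReal := min r1 r2 with hr
  have hrr1 : (r:ℝ) ≤ r1 := by exact_mod_cast min_le_left r1 r2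
  have hrr2 : (r:ℝ) ≤ r2 := by exact_mod_cast min_le_right r1 r2
  have hr0 : (0:ℝ) ≤ r := r.coe_nonneg
  set c : ℕ → ℂ := fun n => ∑ j ∈ Finset.range (n+1), a j * b (n - j) with hc
  -- the real Cauchy product dominating sequence
  have hconv : Summable fun n =>
      ‖∑ j ∈ Finset.range (n+1), (‖a j‖ * (r1:ℝ)^j) * (‖b (n-j)‖ * (r2:ℝ)^(n-j))‖ := by
    apply summable_norm_sum_mul_range_of_summable_norm
      (f := fun n => ‖a n‖ * (r1:ℝ)^n) (g := fun n => ‖b n‖ * (r2:ℝ)^n)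
    · refine hs1.congr fun n => ?_
      rw [Real.norm_of_nonneg (by positivity)]
    · refine hs2.congr fun n => ?_
      rw [Real.norm_of_nonneg (by positivity)]
  have hA : Summable fun n => ‖c n‖ * (r:ℝ)^n := by
    refine Summable.of_nonneg_of_le (fun n => by positivity) (fun n => ?_) hconv
    have hn : (0:ℝ) ≤ ∑ j ∈ Finset.range (n+1), (‖a j‖ * (r1:ℝ)^j) * (‖b (n-j)‖ * (r2:ℝ)^(n-j)) :=
      Finset.sum_nonneg fun j _ => by positivity
    rw [Real.norm_of_nonneg hn]
    calc ‖c n‖ * (r:ℝ)^n ≤ (∑ j ∈ Finset.range (n+1), ‖a j * b (n - j)‖) * (r:ℝ)^n :=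
          mul_le_mul_of_nonneg_right (norm_sum_le _ _) (by positivity)
      _ = ∑ j ∈ Finset.range (n+1), ‖a j‖ * ‖b (n-j)‖ * (r:ℝ)^n := by
          rw [Finset.sum_mul]
          exact Finset.sum_congr rfl fun j _ => by rw [norm_mul]
      _ ≤ ∑ j ∈ Finset.range (n+1), (‖a j‖ * (r1:ℝ)^j) * (‖b (n-j)‖ * (r2:ℝ)^(n-j)) := by
          apply Finset.sum_le_sum
          intro j hj
          have hjn : j ≤ n := Nat.lt_succ_iff.1 (Finset.mem_range.1 hj)
          have hpow : (r:ℝ)^n = (r:ℝ)^j * (r:ℝ)^(n-j) := by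
            rw [← pow_add, Nat.add_sub_cancel' hjn]
          rw [hpow]
          calc ‖a j‖ * ‖b (n-j)‖ * ((r:ℝ)^j * (r:ℝ)^(n-j))
              = (‖a j‖ * (r:ℝ)^j) * (‖b (n-j)‖ * (r:ℝ)^(n-j)) := by ring
            _ ≤ (‖a j‖ * (r1:ℝ)^j) * (‖b (n-j)‖ * (r2:ℝ)^(n-j)) := by
                apply mul_le_mul
                · exact mul_le_mul_of_nonneg_left (pow_le_pow_left₀ hr0 hrr1 j) (norm_nonneg _)
                · exact mul_le_mul_of_nonneg_left (pow_le_pow_left₀ hr0 hrr2 _) (norm_nonneg _)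
                · positivity
                · positivity
  have hB : ∀ y : ℂ, ‖y‖ < r → HasSum (fun n => c n * y ^ n) ((fun z => f z * g z) y) := by
    intro y hy
    have hy1 : ‖y‖ < r1 := lt_of_lt_of_le hy hrr1
    have hy2 : ‖y‖ < r2 := lt_of_lt_of_le hy hrr2
    have hF : Summable fun n => ‖a n * y ^ n‖ := by
      refine Summable.of_nonneg_of_le (fun n => norm_nonneg _) (fun n => ?_) hs1
      rw [norm_mul, norm_pow]
      exact mul_le_mul_of_nonneg_left (pow_le_pow_left₀ (norm_nonneg y) hy1.le n) (norm_nonneg _)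
    have hG : Summable fun n => ‖b n * y ^ n‖ := by
      refine Summable.of_nonneg_of_le (fun n => norm_nonneg _) (fun n => ?_) hs2
      rw [norm_mul, norm_pow]
      exact mul_le_mul_of_nonneg_left (pow_le_pow_left₀ (norm_nonneg y) hy2.le n) (norm_nonneg _)
    have htsum := tsum_mul_tsum_eq_tsum_sum_range_of_summable_norm hF hG
    have hsummconv := (summable_norm_sum_mul_range_of_summable_norm hF hG).of_norm
    have hfy := (he1 y hy1).tsum_eq
    have hgy := (he2 y hy2).tsum_eq
    have hterm : ∀ n, (∑ j ∈ Finset.range (n+1), (a j * y ^ j) * (b (n-j) * y ^ (n-j)))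
        = c n * y ^ n := by
      intro n
      rw [hc, Finset.sum_mul]
      refine Finset.sum_congr rfl fun j hj => ?_
      have hjn : j ≤ n := Nat.lt_succ_iff.1 (Finset.mem_range.1 hj)
      have hyp : y ^ j * y ^ (n - j) = y ^ n := by
        rw [← pow_add, Nat.add_sub_cancel' hjn]
      calc a j * y ^ j * (b (n-j) * y ^ (n-j)) = a j * b (n-j) * (y^j * y^(n-j)) := by ring
        _ = a j * b (n-j) * y ^ n := by rw [hyp]
    have : HasSum (fun n => ∑ j ∈ Finset.range (n+1), (a j * y ^ j) * (b (n-j) * y ^ (n-j)))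
        (f y * g y) := by
      rw [← hfy, ← hgy, htsum]
      exact hsummconv.hasSum
    exact (this.congr_fun fun n => (hterm n).symm : _)
  exact hardyCoeff_of_hasSum (lt_min h1 h2) hA hB k

lemma conv_deriv (a b : ℕ → ℂ) (k : ℕ) :
    ((k:ℂ)+1) * ∑ j ∈ Finset.range (k+2), a j * b (k+1-j)
      = (∑ j ∈ Finset.range (k+1), (((j:ℂ))+1) * a (j+1) * b (k-j))
        + ∑ j ∈ Finset.range (k+1), a j * ((((k-j:ℕ):ℂ))+1) * b (k-j+1) := by
  rw [Finset.mul_sum]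
  have hsplit : ∀ j ∈ Finset.range (k+2), ((k:ℂ)+1) * (a j * b (k+1-j))
      = (j:ℂ) * (a j * b (k+1-j)) + ((k+1-j:ℕ):ℂ) * (a j * b (k+1-j)) := by
    intro j hj
    have hjk : j ≤ k+1 := Nat.lt_succ_iff.1 (Finset.mem_range.1 hj)
    have : ((k+1-j:ℕ):ℂ) = ((k:ℂ)+1) - (j:ℂ) := by
      have := Nat.cast_sub (R := ℂ) hjk
      push_cast at this ⊢
      rw [this]
    rw [this]
    ring
  rw [Finset.sum_congr rfl hsplit, Finset.sum_add_distrib]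
  congr 1
  · rw [Finset.sum_range_succ']
    simp only [Nat.cast_zero, zero_mul, add_zero]
    refine Finset.sum_congr rfl fun j hj => ?_
    have : k + 1 - (j+1) = k - j := by omega
    rw [this]
    push_cast
    ring
  · rw [Finset.sum_range_succ]
    simp only [Nat.sub_self, Nat.cast_zero, zero_mul, add_zero]
    refine Finset.sum_congr rfl fun j hj => ?_
    have hjk : j ≤ k := Nat.lt_succ_iff.1 (Finset.mem_range.1 hj)
    have h1 : k + 1 - j = (k - j) + 1 := by omega
    rw [h1]
    push_cast
    ring

lemma hardyCoeff_deriv_mul {f g : ℂ → ℂ} (hf : AnalyticAt ℂ f 0) (hg : AnalyticAt ℂ g 0) (k : ℕ) :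
    hardyCoeff (deriv fun z => f z * g z) k
      = (∑ j ∈ Finset.range (k+1), hardyCoeff (deriv f) j * hardyCoeff g (k-j))
        + ∑ j ∈ Finset.range (k+1), hardyCoeff f j * hardyCoeff (deriv g) (k-j) := by
  rw [hardyCoeff_deriv, hardyCoeff_mul hf hg (k+1), conv_deriv]
  congr 1
  · refine Finset.sum_congr rfl fun j hj => ?_
    rw [hardyCoeff_deriv]
  · refine Finset.sum_congr rfl fun j hj => ?_
    rw [hardyCoeff_deriv]
    ring

/-- Cauchy–Schwarz for infinite sums of nonnegative reals. -/
lemma cs_tsum {u v : ℕ → ℝ} (hu : ∀ k, 0 ≤ u k) (hv : ∀ k, 0 ≤ v k)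
    (hu2 : Summable (fun k => u k ^ 2)) (hv2 : Summable (fun k => v k ^ 2)) :
    Summable (fun k => u k * v k) ∧
      ∑' k, u k * v k ≤ Real.sqrt (∑' k, u k ^ 2) * Real.sqrt (∑' k, v k ^ 2) := by
  have hsumm : Summable (fun k => u k * v k) := by
    apply Summable.of_nonneg_of_le (fun k => mul_nonneg (hu k) (hv k))
      (fun k => ?_) ((hu2.add hv2).div_const 2)
    nlinarith [sq_nonneg (u k - v k)]
  refine ⟨hsumm, Summable.tsum_le_of_sum_range_le hsumm fun n => ?_⟩
  have h1 : (∑ i ∈ range n, u i * v i) ^ 2 ≤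
      (∑ i ∈ range n, u i ^ 2) * ∑ i ∈ range n, v i ^ 2 :=
    Finset.sum_mul_sq_le_sq_mul_sq _ _ _
  have h2 : (∑ i ∈ range n, u i ^ 2) ≤ ∑' k, u k ^ 2 :=
    Summable.sum_le_tsum _ (fun k _ => sq_nonneg _) hu2
  have h3 : (∑ i ∈ range n, v i ^ 2) ≤ ∑' k, v k ^ 2 :=
    Summable.sum_le_tsum _ (fun k _ => sq_nonneg _) hv2
  have hn : 0 ≤ ∑ i ∈ range n, u i * v i :=
    Finset.sum_nonneg fun i _ => mul_nonneg (hu i) (hv i)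
  have key : (∑ i ∈ range n, u i * v i) ^ 2 ≤ (∑' k, u k ^ 2) * (∑' k, v k ^ 2) := by
    refine h1.trans (mul_le_mul h2 h3 (Finset.sum_nonneg fun i _ => sq_nonneg _) ?_)
    exact tsum_nonneg fun k => sq_nonneg _
  calc ∑ i ∈ range n, u i * v i = Real.sqrt ((∑ i ∈ range n, u i * v i) ^ 2) :=
        (Real.sqrt_sq hn).symm
    _ ≤ Real.sqrt ((∑' k, u k ^ 2) * (∑' k, v k ^ 2)) := Real.sqrt_le_sqrt key
    _ = _ := Real.sqrt_mul (tsum_nonneg fun k => sq_nonneg _) _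

/-- `ℓ¹ ⊆ ℓ²` for nonnegative sequences. -/
lemma l1_l2 {w : ℕ → ℝ} (hw : ∀ k, 0 ≤ w k) (h : Summable w) :
    Summable (fun k => w k ^ 2) ∧ ∑' k, w k ^ 2 ≤ (∑' k, w k) ^ 2 := by
  have hW : ∀ k, w k ≤ ∑' k, w k := fun k => Summable.le_tsum h k (fun j _ => hw j)
  have hb : ∀ k, w k ^ 2 ≤ w k * ∑' k, w k := fun k => by
    rw [sq]; exact mul_le_mul_of_nonneg_left (hW k) (hw k)
  have hs : Summable (fun k => w k ^ 2) :=
    Summable.of_nonneg_of_le (fun k => sq_nonneg _) hb (h.mul_right _)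
  refine ⟨hs, (Summable.tsum_le_tsum hb hs (h.mul_right _)).trans ?_⟩
  rw [tsum_mul_right, sq]

/-- Young's inequality `‖u ⋆ v‖₂ ≤ ‖u‖₂ ‖v‖₁` for nonnegative sequences. -/
lemma young {u v : ℕ → ℝ} (hu : ∀ k, 0 ≤ u k) (hv : ∀ k, 0 ≤ v k)
    (hu2 : Summable fun k => u k ^ 2) (hv1 : Summable v) :
    Summable (fun k => (∑ j ∈ Finset.range (k+1), u j * v (k - j)) ^ 2) ∧
      ∑' k, (∑ j ∈ Finset.range (k+1), u j * v (k - j)) ^ 2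
        ≤ (∑' k, u k ^ 2) * (∑' k, v k) ^ 2 := by
  set B := ∑' k, v k with hB
  have hB0 : 0 ≤ B := tsum_nonneg hv
  set d : ℕ → ℝ := fun k => ∑ j ∈ range (k+1), u j ^ 2 * v (k - j) with hd
  have hd0 : ∀ k, 0 ≤ d k := fun k =>
    Finset.sum_nonneg fun j _ => mul_nonneg (sq_nonneg _) (hv _)
  -- summability of d (Cauchy product)
  have hnormu : Summable (fun k => ‖u k ^ 2‖) := by
    simpa [Real.norm_of_nonneg (sq_nonneg _)] using hu2
  have hnormv : Summable (fun k => ‖v k‖) := by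
    simpa [Real.norm_of_nonneg (hv _)] using hv1
  have hdsumm : Summable d := by
    have := summable_norm_sum_mul_range_of_summable_norm hnormu hnormv
    refine this.congr fun k => ?_
    exact Real.norm_of_nonneg (hd0 k)
  have hdsum : ∑' k, d k = (∑' k, u k ^ 2) * B := by
    rw [hB, ← tsum_mul_tsum_eq_tsum_sum_range_of_summable_norm hnormu hnormv]
  -- pointwise bound
  have hpt : ∀ k, (∑ j ∈ range (k+1), u j * v (k - j)) ^ 2 ≤ B * d k := by
    intro k
    have hcs : (∑ j ∈ range (k+1), u j * v (k - j)) ^ 2 ≤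
        (∑ j ∈ range (k+1), u j ^ 2 * v (k - j)) * ∑ j ∈ range (k+1), v (k - j) := by
      have := Finset.sum_mul_sq_le_sq_mul_sq (range (k+1))
        (fun j => u j * Real.sqrt (v (k - j))) (fun j => Real.sqrt (v (k - j)))
      calc (∑ j ∈ range (k+1), u j * v (k - j)) ^ 2
          = (∑ j ∈ range (k+1), (u j * Real.sqrt (v (k - j))) * Real.sqrt (v (k - j))) ^ 2 := by
            congr 1; apply Finset.sum_congr rfl; intro j _
            rw [mul_assoc, Real.mul_self_sqrt (hv _)]
        _ ≤ (∑ j ∈ range (k+1), (u j * Real.sqrt (v (k - j))) ^ 2)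
              * ∑ j ∈ range (k+1), Real.sqrt (v (k - j)) ^ 2 := this
        _ = (∑ j ∈ range (k+1), u j ^ 2 * v (k - j)) * ∑ j ∈ range (k+1), v (k - j) := by
            congr 1
            · apply Finset.sum_congr rfl; intro j _
              rw [mul_pow, Real.sq_sqrt (hv _)]
            · apply Finset.sum_congr rfl; intro j _
              exact Real.sq_sqrt (hv _)
    have hvsum : (∑ j ∈ range (k+1), v (k - j)) ≤ B := by
      rw [show (∑ j ∈ range (k+1), v (k - j)) = ∑ j ∈ range (k+1), v (k + 1 - 1 - j) by
        simp]
      rw [Finset.sum_range_reflect]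
      exact Summable.sum_le_tsum _ (fun j _ => hv j) hv1
    calc (∑ j ∈ range (k+1), u j * v (k - j)) ^ 2
        ≤ (∑ j ∈ range (k+1), u j ^ 2 * v (k - j)) * ∑ j ∈ range (k+1), v (k - j) := hcs
      _ ≤ d k * B := mul_le_mul_of_nonneg_left hvsum (hd0 k)
      _ = B * d k := mul_comm _ _
  have hsq0 : ∀ k, 0 ≤ (∑ j ∈ range (k+1), u j * v (k - j)) ^ 2 := fun k => sq_nonneg _
  have hsumm : Summable (fun k => (∑ j ∈ range (k+1), u j * v (k - j)) ^ 2) :=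
    Summable.of_nonneg_of_le hsq0 hpt (hdsumm.mul_left B)
  refine ⟨hsumm, (Summable.tsum_le_tsum hpt hsumm (hdsumm.mul_left B)).trans ?_⟩
  rw [tsum_mul_left, hdsum, sq]
  ring_nf
  exact le_refl _

lemma q_eq (k : ℕ) : (1:ℝ) / ((k+1)*(k+2)) = 1/(k+1) - 1/(k+2) := by
  have h1 : ((k:ℝ)+1) ≠ 0 := by positivity
  have h2 : ((k:ℝ)+2) ≠ 0 := by positivity
  field_simp
  ring

lemma q_partial (n : ℕ) : ∑ i ∈ range n, (1:ℝ) / ((i+1)*(i+2)) = 1 - 1/(n+1) := by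
  have : ∀ i ∈ range n, (1:ℝ) / ((i+1)*(i+2))
      = (fun k : ℕ => -(1/((k:ℝ)+1))) (i+1) - (fun k : ℕ => -(1/((k:ℝ)+1))) i := by
    intro i _
    rw [q_eq]
    push_cast
    ring
  rw [Finset.sum_congr rfl this, Finset.sum_range_sub (fun k : ℕ => -(1/((k:ℝ)+1))) n]
  push_cast
  ring

lemma q_summable : Summable (fun k : ℕ => (1:ℝ) / ((k+1)*(k+2))) := by
  apply summable_of_sum_range_le (c := 1) (fun k => by positivity)
  intro n
  rw [q_partial]
  have : (0:ℝ) ≤ 1/(n+1) := by positivity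
  linarith

lemma q_tsum_le : ∑' k : ℕ, (1:ℝ) / ((k+1)*(k+2)) ≤ 1 := by
  apply Summable.tsum_le_of_sum_range_le q_summable
  intro n
  rw [q_partial]
  have : (0:ℝ) ≤ 1/(n+1) := by positivity
  linarith

lemma S_summable : Summable (fun k : ℕ => 1 / (1 + (k:ℝ)^2)) := by
  refine Summable.of_nonneg_of_le (fun k => by positivity) (fun k => ?_) (q_summable.mul_left 3)
  rw [mul_one_div, div_le_div_iff₀ (by positivity) (by positivity)]
  rcases k with _ | m
  · norm_num
  · push_cast
    nlinarith [Nat.cast_nonneg (α := ℝ) m]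

lemma q1_summable : Summable (fun k : ℕ => (1:ℝ) / ((k+2)*(k+3))) := by
  have := (summable_nat_add_iff (f := fun k : ℕ => (1:ℝ) / ((k+1)*(k+2))) 1).2 q_summable
  refine this.congr fun k => ?_
  push_cast
  ring_nf

lemma q1_tsum_le : ∑' k : ℕ, (1:ℝ) / ((k+2)*(k+3)) ≤ 1/2 := by
  have key := Summable.sum_add_tsum_nat_add (f := fun k : ℕ => (1:ℝ) / ((k+1)*(k+2))) 1 q_summable
  have h1 : ∑ i ∈ range 1, (1:ℝ) / ((i+1)*(i+2)) = 1/2 := by norm_num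
  have heq : (∑' k : ℕ, (1:ℝ) / ((k+2)*(k+3)))
      = ∑' k : ℕ, (1:ℝ) / (((((k+1:ℕ)):ℝ)+1) * ((((k+1:ℕ)):ℝ)+2)) := by
    refine tsum_congr fun k => ?_
    push_cast
    ring_nf
  rw [heq]
  linarith [key, h1, q_tsum_le]

lemma S_le : ∑' k : ℕ, 1 / (1 + (k:ℝ)^2) ≤ 2.2 := by
  have key := Summable.sum_add_tsum_nat_add (f := fun k : ℕ => 1 / (1 + (k:ℝ)^2)) 3 S_summable
  have h1 : ∑ i ∈ range 3, (1:ℝ) / (1 + (i:ℝ)^2) = 1 + 1/2 + 1/5 := by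
    simp [Finset.sum_range_succ]
    norm_num
  have h3 : Summable (fun k : ℕ => 1 / (1 + ((k+3:ℕ):ℝ)^2)) := by
    exact_mod_cast (summable_nat_add_iff 3).2 S_summable
  have htail : ∑' k : ℕ, 1 / (1 + ((k+3:ℕ):ℝ)^2) ≤ 1/2 := by
    refine (Summable.tsum_le_tsum (fun k => ?_) h3 q1_summable).trans q1_tsum_le
    apply div_le_div_of_nonneg_left (by norm_num) (by positivity)
    push_cast
    nlinarith [Nat.cast_nonneg (α := ℝ) k]
  push_cast at key
  push_cast at htail h1
  norm_num at key h1 htail ⊢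
  linarith

lemma conv_comm (x y : ℕ → ℝ) (k : ℕ) :
    ∑ j ∈ Finset.range (k+1), x j * y (k-j) = ∑ j ∈ Finset.range (k+1), y j * x (k-j) := by
  rw [← Finset.sum_range_reflect]
  refine Finset.sum_congr rfl fun j hj => ?_
  have hj' : j ≤ k := Nat.lt_succ_iff.1 (Finset.mem_range.1 hj)
  have e1 : k + 1 - 1 - j = k - j := by omega
  have e2 : k - (k - j) = j := by omega
  rw [e1, e2, mul_comm]

lemma normH2_sq (f : ℂ → ℂ) : normH2 f ^ 2 = ∑' k, ‖hardyCoeff f k‖ ^ 2 :=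
  Real.sq_sqrt (tsum_nonneg fun k => sq_nonneg _)

lemma normS_eq (f : ℂ → ℂ) : normS 1 f =
    Real.sqrt ((∑' k, ‖hardyCoeff (deriv f) k‖ ^ 2) + ∑' k, ‖hardyCoeff f k‖ ^ 2) := by
  rw [normS, iteratedDeriv_one, normH2_sq, normH2_sq]

/-- ℓ¹ control of the Taylor coefficients of an `S₁²` function. -/
lemma func_facts {f : ℂ → ℂ} (hfs : Summable fun k => ‖hardyCoeff f k‖ ^ 2)
    (hfs' : Summable fun k => ‖hardyCoeff (deriv f) k‖ ^ 2) :
    Summable (fun k => ‖hardyCoeff f k‖) ∧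
      ∑' k, ‖hardyCoeff f k‖ ≤ Real.sqrt (∑' k : ℕ, 1/(1+(k:ℝ)^2)) *
        Real.sqrt ((∑' k, ‖hardyCoeff (deriv f) k‖ ^ 2) + ∑' k, ‖hardyCoeff f k‖ ^ 2) := by
  have hu'_eq : ∀ k : ℕ, ‖hardyCoeff (deriv f) k‖ = ((k:ℝ)+1) * ‖hardyCoeff f (k+1)‖ := by
    intro k
    rw [hardyCoeff_deriv, norm_mul]
    congr 1
    have : ((k:ℂ)+1) = ((k+1:ℕ):ℂ) := by push_cast; ring
    rw [this, Complex.norm_natCast]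
    push_cast
    ring
  set t : ℕ → ℝ := fun k => (k:ℝ)^2 * ‖hardyCoeff f k‖ ^ 2 with ht
  have hshift : ∀ k : ℕ, t (k+1) = ‖hardyCoeff (deriv f) k‖ ^ 2 := by
    intro k
    rw [ht, hu'_eq]
    push_cast
    ring
  have hts : Summable t := by
    refine (summable_nat_add_iff 1).1 (hfs'.congr fun k => (hshift k).symm)
  have htsum : ∑' k, t k = ∑' k, ‖hardyCoeff (deriv f) k‖ ^ 2 := by
    rw [Summable.tsum_eq_zero_add hts]
    have ht0 : t 0 = 0 := by simp [ht]
    rw [ht0, zero_add]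
    exact tsum_congr hshift
  set w : ℕ → ℝ := fun k => Real.sqrt (1+(k:ℝ)^2) * ‖hardyCoeff f k‖ with hw
  have hw2 : ∀ k, w k ^ 2 = ‖hardyCoeff f k‖ ^ 2 + t k := by
    intro k
    rw [hw, ht, mul_pow, Real.sq_sqrt (by positivity)]
    ring
  have hwsumm : Summable (fun k => w k ^ 2) :=
    ((hfs.add hts).congr fun k => (hw2 k).symm)
  have hwsum : ∑' k, w k ^ 2 = (∑' k, ‖hardyCoeff (deriv f) k‖ ^ 2) + ∑' k, ‖hardyCoeff f k‖ ^ 2 := by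
    rw [tsum_congr hw2, Summable.tsum_add hfs hts, htsum, add_comm]
  have hp2 : Summable (fun k : ℕ => (1/Real.sqrt (1+(k:ℝ)^2)) ^ 2) := by
    refine S_summable.congr fun k => ?_
    rw [div_pow, one_pow, Real.sq_sqrt (by positivity)]
  have hcs := cs_tsum (u := fun k : ℕ => 1/Real.sqrt (1+(k:ℝ)^2)) (v := w)
    (fun k => by positivity) (fun k => by rw [hw]; positivity) hp2 hwsumm
  have hpw : ∀ k : ℕ, (1/Real.sqrt (1+(k:ℝ)^2)) * w k = ‖hardyCoeff f k‖ := by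
    intro k
    rw [hw, one_div, inv_mul_cancel_left₀ (by positivity)]
  constructor
  · exact hcs.1.congr hpw
  · have h1 : ∑' k : ℕ, (1/Real.sqrt (1+(k:ℝ)^2)) * w k = ∑' k, ‖hardyCoeff f k‖ :=
      tsum_congr hpw
    have h2 : ∑' k : ℕ, (1/Real.sqrt (1+(k:ℝ)^2)) ^ 2 = ∑' k : ℕ, 1/(1+(k:ℝ)^2) := by
      refine tsum_congr fun k => ?_
      rw [div_pow, one_pow, Real.sq_sqrt (by positivity)]
    calc ∑' k, ‖hardyCoeff f k‖ = ∑' k : ℕ, (1/Real.sqrt (1+(k:ℝ)^2)) * w k := h1.symm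
      _ ≤ Real.sqrt (∑' k : ℕ, (1/Real.sqrt (1+(k:ℝ)^2)) ^ 2) * Real.sqrt (∑' k, w k ^ 2) := hcs.2
      _ = _ := by rw [h2, hwsum]

/-- If `f, g ∈ S₁²`, then `fg ∈ S₁²` and `‖fg‖_{S₁²} ≤ 4‖f‖_{S₁²}‖g‖_{S₁²}`. -/
theorem stmt2 (f g : ℂ → ℂ) (hf : MemS 1 f) (hg : MemS 1 g) :
    MemS 1 (fun z => f z * g z) ∧
    normS 1 (fun z => f z * g z) ≤ 4 * normS 1 f * normS 1 g := by
  obtain ⟨⟨hfa, hfs⟩, hfd⟩ := hf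
  obtain ⟨⟨hga, hgs⟩, hgd⟩ := hg
  rw [iteratedDeriv_one] at hfd hgd
  obtain ⟨hfa', hfs'⟩ := hfd
  obtain ⟨hga', hgs'⟩ := hgd
  have h0 : (0:ℂ) ∈ Metric.ball (0:ℂ) 1 := Metric.mem_ball_self one_pos
  have hfa0 : AnalyticAt ℂ f 0 := hfa 0 h0
  have hga0 : AnalyticAt ℂ g 0 := hga 0 h0
  obtain ⟨hul1, hαle⟩ := func_facts hfs hfs'
  obtain ⟨hvl1, hβle⟩ := func_facts hgs hgs'
  have hul1n : Summable fun k => ‖(‖hardyCoeff f k‖)‖ :=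
    hul1.congr fun k => (Real.norm_of_nonneg (norm_nonneg _)).symm
  have hvl1n : Summable fun k => ‖(‖hardyCoeff g k‖)‖ :=
    hvl1.congr fun k => (Real.norm_of_nonneg (norm_nonneg _)).symm
  -- pointwise convolution bounds
  have hcb : ∀ k, ‖hardyCoeff (fun z => f z * g z) k‖ ≤
      ∑ j ∈ Finset.range (k+1), ‖hardyCoeff f j‖ * ‖hardyCoeff g (k-j)‖ := by
    intro k
    rw [hardyCoeff_mul hfa0 hga0 k]
    exact (norm_sum_le _ _).trans (le_of_eq (Finset.sum_congr rfl fun j _ => norm_mul _ _))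
  have hc'b : ∀ k, ‖hardyCoeff (deriv fun z => f z * g z) k‖ ≤
      (∑ j ∈ Finset.range (k+1), ‖hardyCoeff (deriv f) j‖ * ‖hardyCoeff g (k-j)‖)
        + ∑ j ∈ Finset.range (k+1), ‖hardyCoeff f j‖ * ‖hardyCoeff (deriv g) (k-j)‖ := by
    intro k
    rw [hardyCoeff_deriv_mul hfa0 hga0 k]
    refine (norm_add_le _ _).trans (add_le_add ?_ ?_)
    · exact (norm_sum_le _ _).trans (le_of_eq (Finset.sum_congr rfl fun j _ => norm_mul _ _))
    · exact (norm_sum_le _ _).trans (le_of_eq (Finset.sum_congr rfl fun j _ => norm_mul _ _))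
  -- ℓ¹ Cauchy product
  have hconvl1 : Summable fun k =>
      ∑ j ∈ Finset.range (k+1), ‖hardyCoeff f j‖ * ‖hardyCoeff g (k-j)‖ :=
    (summable_norm_sum_mul_range_of_summable_norm hul1n hvl1n).congr fun k =>
      Real.norm_of_nonneg (Finset.sum_nonneg fun j _ => mul_nonneg (norm_nonneg _) (norm_nonneg _))
  have hconvsum : ∑' k, ∑ j ∈ Finset.range (k+1), ‖hardyCoeff f j‖ * ‖hardyCoeff g (k-j)‖
      = (∑' k, ‖hardyCoeff f k‖) * ∑' k, ‖hardyCoeff g k‖ :=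
    (tsum_mul_tsum_eq_tsum_sum_range_of_summable_norm hul1n hvl1n).symm
  obtain ⟨hconv2, hconv2le⟩ := l1_l2
    (fun k => Finset.sum_nonneg fun j _ => mul_nonneg (norm_nonneg _) (norm_nonneg _)) hconvl1
  -- Young's inequality applications
  obtain ⟨hy1s, hy1le⟩ := young (fun k => norm_nonneg _) (fun k => norm_nonneg _) hfs' hvl1
  obtain ⟨hy2s, hy2le⟩ := young (fun k => norm_nonneg _) (fun k => norm_nonneg _) hgs' hul1
  have hflip : ∀ k, ∑ j ∈ Finset.range (k+1), ‖hardyCoeff f j‖ * ‖hardyCoeff (deriv g) (k-j)‖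
      = ∑ j ∈ Finset.range (k+1), ‖hardyCoeff (deriv g) j‖ * ‖hardyCoeff f (k-j)‖ :=
    fun k => conv_comm (fun j => ‖hardyCoeff f j‖) (fun j => ‖hardyCoeff (deriv g) j‖) k
  have hy2s' : Summable fun k =>
      (∑ j ∈ Finset.range (k+1), ‖hardyCoeff f j‖ * ‖hardyCoeff (deriv g) (k-j)‖) ^ 2 :=
    hy2s.congr fun k => by rw [hflip k]
  have hy2le' : ∑' k, (∑ j ∈ Finset.range (k+1), ‖hardyCoeff f j‖ * ‖hardyCoeff (deriv g) (k-j)‖) ^ 2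
      ≤ (∑' k, ‖hardyCoeff (deriv g) k‖ ^ 2) * (∑' k, ‖hardyCoeff f k‖) ^ 2 := by
    rw [tsum_congr (fun k => by rw [hflip k] :
      ∀ k, (∑ j ∈ Finset.range (k+1), ‖hardyCoeff f j‖ * ‖hardyCoeff (deriv g) (k-j)‖) ^ 2
        = (∑ j ∈ Finset.range (k+1), ‖hardyCoeff (deriv g) j‖ * ‖hardyCoeff f (k-j)‖) ^ 2)]
    exact hy2le
  -- summability of product coefficients
  have hfg2 : Summable fun k => ‖hardyCoeff (fun z => f z * g z) k‖ ^ 2 :=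
    Summable.of_nonneg_of_le (fun k => sq_nonneg _)
      (fun k => pow_le_pow_left₀ (norm_nonneg _) (hcb k) 2) hconv2
  have hder_pt : ∀ k, ‖hardyCoeff (deriv fun z => f z * g z) k‖ ^ 2 ≤
      2 * (∑ j ∈ Finset.range (k+1), ‖hardyCoeff (deriv f) j‖ * ‖hardyCoeff g (k-j)‖) ^ 2
        + 2 * (∑ j ∈ Finset.range (k+1), ‖hardyCoeff f j‖ * ‖hardyCoeff (deriv g) (k-j)‖) ^ 2 := by
    intro k
    have h1 := pow_le_pow_left₀ (norm_nonneg _) (hc'b k) 2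
    have h2 : (0:ℝ) ≤ ∑ j ∈ Finset.range (k+1), ‖hardyCoeff (deriv f) j‖ * ‖hardyCoeff g (k-j)‖ :=
      Finset.sum_nonneg fun j _ => mul_nonneg (norm_nonneg _) (norm_nonneg _)
    have h3 : (0:ℝ) ≤ ∑ j ∈ Finset.range (k+1), ‖hardyCoeff f j‖ * ‖hardyCoeff (deriv g) (k-j)‖ :=
      Finset.sum_nonneg fun j _ => mul_nonneg (norm_nonneg _) (norm_nonneg _)
    nlinarith [sq_nonneg ((∑ j ∈ Finset.range (k+1), ‖hardyCoeff (deriv f) j‖ * ‖hardyCoeff g (k-j)‖)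
      - ∑ j ∈ Finset.range (k+1), ‖hardyCoeff f j‖ * ‖hardyCoeff (deriv g) (k-j)‖)]
  have hderiv2 : Summable fun k => ‖hardyCoeff (deriv fun z => f z * g z) k‖ ^ 2 :=
    Summable.of_nonneg_of_le (fun k => sq_nonneg _) hder_pt
      ((hy1s.mul_left 2).add (hy2s'.mul_left 2))
  -- membership
  refine ⟨⟨⟨hfa.mul hga, hfg2⟩, ?_⟩, ?_⟩
  · rw [iteratedDeriv_one]
    exact ⟨(hfa.mul hga).deriv, hderiv2⟩
  -- the norm inequality
  set S : ℝ := ∑' k : ℕ, 1/(1+(k:ℝ)^2) with hSdef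
  have hS : S ≤ 2.2 := S_le
  have hS0 : 0 ≤ S := tsum_nonneg fun k => by positivity
  set Tf : ℝ := ∑' k, ‖hardyCoeff f k‖ ^ 2 with hTf
  set T'f : ℝ := ∑' k, ‖hardyCoeff (deriv f) k‖ ^ 2 with hT'f
  set Tg : ℝ := ∑' k, ‖hardyCoeff g k‖ ^ 2 with hTg
  set T'g : ℝ := ∑' k, ‖hardyCoeff (deriv g) k‖ ^ 2 with hT'g
  set α : ℝ := ∑' k, ‖hardyCoeff f k‖ with hα
  set β : ℝ := ∑' k, ‖hardyCoeff g k‖ with hβ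
  have hTf0 : 0 ≤ Tf := tsum_nonneg fun k => sq_nonneg _
  have hTg0 : 0 ≤ Tg := tsum_nonneg fun k => sq_nonneg _
  have hT'f0 : 0 ≤ T'f := tsum_nonneg fun k => sq_nonneg _
  have hT'g0 : 0 ≤ T'g := tsum_nonneg fun k => sq_nonneg _
  have hα0 : 0 ≤ α := tsum_nonneg fun k => norm_nonneg _
  have hβ0 : 0 ≤ β := tsum_nonneg fun k => norm_nonneg _
  have hFeq : normS 1 f = Real.sqrt (T'f + Tf) := normS_eq f
  have hGeq : normS 1 g = Real.sqrt (T'g + Tg) := normS_eq g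
  have hF0 : 0 ≤ normS 1 f := hFeq ▸ Real.sqrt_nonneg _
  have hG0 : 0 ≤ normS 1 g := hGeq ▸ Real.sqrt_nonneg _
  have hF2 : normS 1 f ^ 2 = T'f + Tf := by
    rw [hFeq]; exact Real.sq_sqrt (add_nonneg hT'f0 hTf0)
  have hG2 : normS 1 g ^ 2 = T'g + Tg := by
    rw [hGeq]; exact Real.sq_sqrt (add_nonneg hT'g0 hTg0)
  have hα2 : α ^ 2 ≤ S * normS 1 f ^ 2 := by
    have : α ≤ Real.sqrt S * normS 1 f := by rw [hFeq]; exact hαle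
    calc α ^ 2 ≤ (Real.sqrt S * normS 1 f) ^ 2 := pow_le_pow_left₀ hα0 this 2
      _ = S * normS 1 f ^ 2 := by rw [mul_pow, Real.sq_sqrt hS0]
  have hβ2 : β ^ 2 ≤ S * normS 1 g ^ 2 := by
    have : β ≤ Real.sqrt S * normS 1 g := by rw [hGeq]; exact hβle
    calc β ^ 2 ≤ (Real.sqrt S * normS 1 g) ^ 2 := pow_le_pow_left₀ hβ0 this 2
      _ = S * normS 1 g ^ 2 := by rw [mul_pow, Real.sq_sqrt hS0]
  have hT'f_le : T'f ≤ normS 1 f ^ 2 := by rw [hF2]; linarith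
  have hT'g_le : T'g ≤ normS 1 g ^ 2 := by rw [hG2]; linarith
  -- bound the two tsums of the product
  have hC2 : (∑' k, ‖hardyCoeff (fun z => f z * g z) k‖ ^ 2) ≤ α ^ 2 * β ^ 2 := by
    calc (∑' k, ‖hardyCoeff (fun z => f z * g z) k‖ ^ 2)
        ≤ ∑' k, (∑ j ∈ Finset.range (k+1), ‖hardyCoeff f j‖ * ‖hardyCoeff g (k-j)‖) ^ 2 :=
          Summable.tsum_le_tsum (fun k => pow_le_pow_left₀ (norm_nonneg _) (hcb k) 2) hfg2 hconv2
      _ ≤ (∑' k, ∑ j ∈ Finset.range (k+1), ‖hardyCoeff f j‖ * ‖hardyCoeff g (k-j)‖) ^ 2 :=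
          hconv2le
      _ = (α * β) ^ 2 := by rw [hconvsum]
      _ = α ^ 2 * β ^ 2 := mul_pow _ _ _
  have hC'2 : (∑' k, ‖hardyCoeff (deriv fun z => f z * g z) k‖ ^ 2)
      ≤ 2 * (T'f * β ^ 2) + 2 * (T'g * α ^ 2) := by
    calc (∑' k, ‖hardyCoeff (deriv fun z => f z * g z) k‖ ^ 2)
        ≤ ∑' k, (2 * (∑ j ∈ Finset.range (k+1), ‖hardyCoeff (deriv f) j‖ * ‖hardyCoeff g (k-j)‖) ^ 2
            + 2 * (∑ j ∈ Finset.range (k+1), ‖hardyCoeff f j‖ * ‖hardyCoeff (deriv g) (k-j)‖) ^ 2) :=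
          Summable.tsum_le_tsum hder_pt hderiv2 ((hy1s.mul_left 2).add (hy2s'.mul_left 2))
      _ = 2 * (∑' k, (∑ j ∈ Finset.range (k+1), ‖hardyCoeff (deriv f) j‖ * ‖hardyCoeff g (k-j)‖) ^ 2)
            + 2 * ∑' k, (∑ j ∈ Finset.range (k+1), ‖hardyCoeff f j‖ * ‖hardyCoeff (deriv g) (k-j)‖) ^ 2 := by
          rw [Summable.tsum_add (hy1s.mul_left 2) (hy2s'.mul_left 2), tsum_mul_left, tsum_mul_left]
      _ ≤ 2 * (T'f * β ^ 2) + 2 * (T'g * α ^ 2) := by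
          have b1 := hy1le
          have b2 := hy2le'
          gcongr
  -- final numeric computation
  have hfinal : (∑' k, ‖hardyCoeff (deriv fun z => f z * g z) k‖ ^ 2)
      + (∑' k, ‖hardyCoeff (fun z => f z * g z) k‖ ^ 2)
      ≤ 16 * (normS 1 f ^ 2 * normS 1 g ^ 2) := by
    have e1 : T'f * β ^ 2 ≤ normS 1 f ^ 2 * (S * normS 1 g ^ 2) :=
      mul_le_mul hT'f_le hβ2 (sq_nonneg _) (sq_nonneg _)
    have e2 : T'g * α ^ 2 ≤ normS 1 g ^ 2 * (S * normS 1 f ^ 2) :=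
      mul_le_mul hT'g_le hα2 (sq_nonneg _) (sq_nonneg _)
    have e3 : α ^ 2 * β ^ 2 ≤ (S * normS 1 f ^ 2) * (S * normS 1 g ^ 2) :=
      mul_le_mul hα2 hβ2 (sq_nonneg _) (mul_nonneg hS0 (sq_nonneg _))
    have hkey : (4 * S + S ^ 2) * (normS 1 f ^ 2 * normS 1 g ^ 2)
        ≤ 16 * (normS 1 f ^ 2 * normS 1 g ^ 2) := by
      apply mul_le_mul_of_nonneg_right _ (mul_nonneg (sq_nonneg _) (sq_nonneg _))
      have h22 : S ^ 2 ≤ 2.2 ^ 2 := pow_le_pow_left₀ hS0 hS 2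
      norm_num at h22 ⊢
      linarith
    have hring : 2*(normS 1 f^2*(S*normS 1 g^2)) + 2*(normS 1 g^2*(S*normS 1 f^2))
        + (S*normS 1 f^2)*(S*normS 1 g^2) = (4*S+S^2)*(normS 1 f^2 * normS 1 g^2) := by ring
    linarith [hC2, hC'2, e1, e2, e3, hkey, hring]
  have hfg_eq : normS 1 (fun z => f z * g z) =
      Real.sqrt ((∑' k, ‖hardyCoeff (deriv fun z => f z * g z) k‖ ^ 2)
        + ∑' k, ‖hardyCoeff (fun z => f z * g z) k‖ ^ 2) := normS_eq _
  rw [hfg_eq]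
  calc Real.sqrt ((∑' k, ‖hardyCoeff (deriv fun z => f z * g z) k‖ ^ 2)
        + ∑' k, ‖hardyCoeff (fun z => f z * g z) k‖ ^ 2)
      ≤ Real.sqrt (16 * (normS 1 f ^ 2 * normS 1 g ^ 2)) := Real.sqrt_le_sqrt hfinal
    _ = 4 * normS 1 f * normS 1 g := by
        rw [show (16 : ℝ) * (normS 1 f ^ 2 * normS 1 g ^ 2) = (4 * normS 1 f * normS 1 g) ^ 2 by ring]
        exact Real.sqrt_sq (by positivity)

end Aux
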